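/- Let 1 < p < 2, 1 < q < 3 with p < q, and λ ≥ 0. Define f_λ(x) = x^q + (1−x)^q − λ(x^p + (1−x)^p) on [0, 1/2]. Set λ_c = (1 − 2^{1−q})/(1 − 2^{1−p}). Then if λ > λ_c the minimum of f_λ on [0,1/2] is attained only at x = 0, and if λ < λ_c the minimum is attained only at x = 1/2. -/

import Mathlib

open Real Set


private lemma slope_mvt {f f' : ℝ → ℝ} {x y : ℝ} (hxy : x < y)
    (hf : ∀ t ∈ Set.Icc x y, HasDerivAt f (f' t) t) :
    ∃ c ∈ Set.Ioo x y, f' c = (f y - f x) / (y - x) :=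
  exists_hasDerivAt_eq_slope f f' hxy
    (fun t ht => (hf t ht).continuousAt.continuousWithinAt)
    (fun t ht => hf t ⟨le_of_lt ht.1, le_of_lt ht.2⟩)

private lemma cc_nonneg {m m' m'' : ℝ → ℝ} {α β : ℝ} (hαβ : α < β)
    (hm : ∀ t ∈ Set.Icc α β, HasDerivAt m (m' t) t)
    (hm' : ∀ t ∈ Set.Icc α β, HasDerivAt m' (m'' t) t)
    (hsign : ∀ s ∈ Set.Ioo α β, ∀ t ∈ Set.Ioo α β, s ≤ t → 0 < m'' s → 0 < m'' t)
    (hα : 0 ≤ m α) (hβ : m β = 0) (hβ' : m' β ≤ 0) :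
    ∀ t ∈ Set.Icc α β, 0 ≤ m t := by
  intro t ht
  by_contra hneg
  push_neg at hneg
  have htα : α < t := lt_of_le_of_ne ht.1 (by rintro rfl; linarith)
  have htβ : t < β := lt_of_le_of_ne ht.2 (by rintro rfl; linarith)
  obtain ⟨s₁, hs₁, hs₁'⟩ := slope_mvt htα (fun u hu => hm u ⟨hu.1, le_trans hu.2 ht.2⟩)
  have h1 : m' s₁ < 0 := by
    rw [hs₁']; apply div_neg_of_neg_of_pos <;> linarith
  obtain ⟨s₂, hs₂, hs₂'⟩ := slope_mvt htβ (fun u hu => hm u ⟨le_trans ht.1 hu.1, hu.2⟩)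
  have h2 : 0 < m' s₂ := by
    rw [hs₂', hβ]; apply div_pos <;> linarith
  have hs12 : s₁ < s₂ := lt_trans hs₁.2 hs₂.1
  have hs1α : α < s₁ := hs₁.1
  have hs2β : s₂ < β := hs₂.2
  obtain ⟨s₄, hs₄, hs₄'⟩ := slope_mvt hs12
    (fun u hu => hm' u ⟨le_trans hs1α.le hu.1, le_trans hu.2 hs2β.le⟩)
  have h4 : 0 < m'' s₄ := by rw [hs₄']; apply div_pos <;> linarith
  obtain ⟨s₃, hs₃, hs₃'⟩ := slope_mvt hs2β
    (fun u hu => hm' u ⟨le_trans hs1α.le (le_trans hs12.le hu.1), hu.2⟩)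
  have h3 : m'' s₃ < 0 := by rw [hs₃']; apply div_neg_of_neg_of_pos <;> linarith
  have hmem4 : s₄ ∈ Set.Ioo α β := ⟨lt_trans hs1α hs₄.1, lt_trans hs₄.2 hs2β⟩
  have hmem3 : s₃ ∈ Set.Ioo α β := ⟨lt_trans hs1α (lt_trans hs12 hs₃.1), hs₃.2⟩
  have := hsign s₄ hmem4 s₃ hmem3 (le_of_lt (lt_trans hs₄.2 hs₃.1)) h4
  linarith

private lemma hd_sq_log {t : ℝ} (ht : t ≠ 0) :
    HasDerivAt (fun x : ℝ => x^2 * Real.log x) (2*t*Real.log t + t) t := by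
  have h := (hasDerivAt_pow 2 t).mul (Real.hasDerivAt_log ht)
  refine h.congr_deriv ?_
  field_simp
  ring

private lemma hd_sq_log' {t : ℝ} (ht : (1:ℝ) - t ≠ 0) :
    HasDerivAt (fun x : ℝ => (1-x)^2 * Real.log (1-x))
      (-(2*(1-t)*Real.log (1-t) + (1-t))) t := by
  have inner : HasDerivAt (fun x : ℝ => 1 - x) (-1) t := by
    simpa using (hasDerivAt_id t).const_sub 1
  have h := (hd_sq_log ht).comp t inner
  refine h.congr_deriv ?_
  ring

private lemma hd_mul_log {t : ℝ} (ht : t ≠ 0) :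
    HasDerivAt (fun x : ℝ => 2*x*Real.log x + x) (2*Real.log t + 3) t := by
  have h := (((hasDerivAt_id t).const_mul 2).mul (Real.hasDerivAt_log ht)).add (hasDerivAt_id t)
  refine h.congr_deriv ?_
  simp only [id_eq]
  field_simp
  ring

private lemma hd_mul_log' {t : ℝ} (ht : (1:ℝ) - t ≠ 0) :
    HasDerivAt (fun x : ℝ => -(2*(1-x)*Real.log (1-x) + (1-x))) (2*Real.log (1-t) + 3) t := by
  have inner : HasDerivAt (fun x : ℝ => 1 - x) (-1) t := by
    simpa using (hasDerivAt_id t).const_sub 1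
  have h := ((hd_mul_log ht).comp t inner).neg
  refine h.congr_deriv ?_
  ring

private lemma log25_ge_one : (1:ℝ) ≤ Real.log 25 := by
  rw [show (1:ℝ) = Real.log (Real.exp 1) by rw [Real.log_exp]]
  exact Real.log_le_log (Real.exp_pos 1) (by linarith [Real.exp_one_lt_d9])

private lemma log25_le : Real.log 25 ≤ 5 * Real.log 2 := by
  rw [show (5:ℝ) * Real.log 2 = Real.log (2^5) by rw [Real.log_pow]; push_cast; ring]
  exact Real.log_le_log (by norm_num) (by norm_num)

private lemma w_small {a : ℝ} (ha : 0 < a) (ha' : a ≤ 1/25) :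
    0 ≤ 2*Real.log 2*(a*(1-a)) + a^2*Real.log a + (1-a)^2*Real.log (1-a) := by
  have hb : (0:ℝ) < 1 - a := by linarith
  have l1 : -((1-a) * Real.log (1-a)) ≤ a := by
    have h := Real.log_le_sub_one_of_pos (inv_pos.mpr hb)
    rw [Real.log_inv] at h
    have h2 := mul_le_mul_of_nonneg_left h hb.le
    rw [mul_sub, mul_inv_cancel₀ hb.ne', mul_neg] at h2
    linarith
  have l1' : -((1-a)^2 * Real.log (1-a)) ≤ a * (1-a) := by
    nlinarith [mul_le_mul_of_nonneg_left l1 hb.le]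
  have l2 : -(a * Real.log a) ≤ Real.log 25 / 25 := by
    have h25a : (0:ℝ) < 25 * a := by linarith
    have h := Real.log_le_sub_one_of_pos (inv_pos.mpr h25a)
    rw [Real.log_inv, Real.log_mul (by norm_num) ha.ne'] at h
    have h2 := mul_le_mul_of_nonneg_left h ha.le
    have h3 : a * (25*a)⁻¹ = 1/25 := by field_simp
    rw [mul_sub, h3, mul_neg, mul_add] at h2
    have h4 : (1/25 - a) * (Real.log 25 - 1) ≥ 0 :=
      mul_nonneg (by linarith) (by linarith [log25_ge_one])
    nlinarith
  have l2' : -(a^2 * Real.log a) ≤ a * (Real.log 25 / 25) := by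
    nlinarith [mul_le_mul_of_nonneg_left l2 ha.le]
  have hL := Real.log_two_gt_d9
  have hL' := Real.log_two_lt_d9
  nlinarith [mul_le_mul_of_nonneg_left log25_le ha.le]

private lemma w_nonneg {a : ℝ} (ha : 0 < a) (ha' : a ≤ 1/2) :
    0 ≤ 2*Real.log 2*(a*(1-a)) + a^2*Real.log a + (1-a)^2*Real.log (1-a) := by
  rcases le_or_gt a (1/25) with hsm | hbig
  · exact w_small ha hsm
  · have key := cc_nonneg (α := 1/25) (β := 1/2)
      (m := fun a : ℝ => 2*Real.log 2*(a*(1-a)) + a^2*Real.log a + (1-a)^2*Real.log (1-a))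
      (m' := fun a : ℝ => 2*Real.log 2*(1-2*a) + (2*a*Real.log a + a)
        + -(2*(1-a)*Real.log (1-a) + (1-a)))
      (m'' := fun a : ℝ => 2*Real.log 2*(-2) + (2*Real.log a + 3) + (2*Real.log (1-a) + 3))
      (by norm_num)
      (fun t ht => by
        have ht0 : t ≠ 0 := by rintro rfl; norm_num at ht
        have ht1 : (1:ℝ) - t ≠ 0 := by
          have := ht.2; intro h; rw [Set.mem_Icc] at ht; linarith [ht.2]
        have d1 : HasDerivAt (fun a : ℝ => a*(1-a)) (1-2*t) t := by
          have h := (hasDerivAt_id t).mul ((hasDerivAt_id t).const_sub 1)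
          refine h.congr_deriv ?_
          simp [id]
          ring
        exact ((d1.const_mul (2*Real.log 2)).add (hd_sq_log ht0)).add (hd_sq_log' ht1))
      (fun t ht => by
        have ht0 : t ≠ 0 := by rintro rfl; norm_num at ht
        have ht1 : (1:ℝ) - t ≠ 0 := by intro h; rw [Set.mem_Icc] at ht; linarith [ht.2]
        have hinner : HasDerivAt (fun a : ℝ => 1 - 2*a) (-2) t := by
          simpa using ((hasDerivAt_id t).const_mul 2).const_sub 1
        exact ((hinner.const_mul (2*Real.log 2)).add (hd_mul_log ht0)).add (hd_mul_log' ht1))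
      (fun s hs t ht hst hpos => by
        rw [Set.mem_Ioo] at hs ht
        have h1 : s*(1-s) ≤ t*(1-t) := by nlinarith [hs.1, hs.2, ht.1, ht.2]
        have hsp : (0:ℝ) < s := by linarith [hs.1]
        have hsp' : (0:ℝ) < 1 - s := by linarith [hs.2]
        have htp : (0:ℝ) < t := by linarith [ht.1]
        have htp' : (0:ℝ) < 1 - t := by linarith [ht.2]
        have h2 : Real.log (s*(1-s)) ≤ Real.log (t*(1-t)) :=
          Real.log_le_log (by positivity) h1
        rw [Real.log_mul hsp.ne' hsp'.ne', Real.log_mul htp.ne' htp'.ne'] at h2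
        linarith)
      (w_small (by norm_num) (by norm_num))
      (by simp only [show ((1:ℝ) - 1/2) = 1/2 from by norm_num,
            show Real.log (1/2) = -Real.log 2 from by rw [one_div, Real.log_inv]]; ring)
      (by simp only [show ((1:ℝ) - 1/2) = 1/2 from by norm_num,
            show Real.log (1/2) = -Real.log 2 from by rw [one_div, Real.log_inv]]; ring_nf; norm_num)
    exact key a ⟨hbig.le, ha'⟩

/-- From `G u = 0`, `G v ≥ 0`, `G w ≤ 0` with `u < v < w` and `G'` strictly increasing:
contradiction. -/
private lemma three_point {G G' : ℝ → ℝ}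
    (hG : ∀ t, HasDerivAt G (G' t) t)
    (hmono : ∀ u v : ℝ, u < v → G' u < G' v)
    {u v w : ℝ} (huv : u < v) (hvw : v < w)
    (h1 : G u = 0) (h2 : 0 ≤ G v) (h3 : G w ≤ 0) : False := by
  obtain ⟨ξ₁, hξ₁, hξ₁'⟩ := slope_mvt huv (fun t _ => hG t)
  obtain ⟨ξ₂, hξ₂, hξ₂'⟩ := slope_mvt hvw (fun t _ => hG t)
  have e1 : 0 ≤ G' ξ₁ := by
    rw [hξ₁', h1]; apply div_nonneg <;> linarith
  have e2 : G' ξ₂ ≤ 0 := by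
    rw [hξ₂']; apply div_nonpos_of_nonpos_of_nonneg <;> linarith
  have := hmono ξ₁ ξ₂ (lt_trans hξ₁.2 hξ₂.1)
  linarith

private lemma hd_exp_mul (c t : ℝ) :
    HasDerivAt (fun r : ℝ => Real.exp (c*r)) (c * Real.exp (c*t)) t := by
  have h := ((hasDerivAt_id t).const_mul c).exp
  simpa [mul_comm] using h

/-- The key inequality: `4a(1-a)(1-2^(1-p)) ≤ 1 - a^p - (1-a)^p` for `1<p<2`, in exp form. -/
private lemma key_ineq {a p : ℝ} (ha : 0 < a) (ha2 : a ≤ 1/2) (hp : 1 < p) (hp2 : p < 2) :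
    4*a*(1-a)*(1 - Real.exp (Real.log 2 * (1-p)))
      ≤ 1 - Real.exp (Real.log a * p) - Real.exp (Real.log (1-a) * p) := by
  have hb : (0:ℝ) < 1 - a := by linarith
  set L := Real.log 2 with hL
  set A := Real.log a with hA
  set B := Real.log (1-a) with hB
  have hAneg : A < 0 := Real.log_neg ha (by linarith)
  have hBneg : B < 0 := Real.log_neg hb (by linarith)
  have hab : 4*a*(1-a) ≤ 1 := by nlinarith [sq_nonneg (1-2*a)]
  -- the auxiliary function M on [0,1]
  have Mres := cc_nonneg (α := (0:ℝ)) (β := 1)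
    (m := fun r : ℝ => (1-4*a*(1-a))*Real.exp (L*r) - a*Real.exp ((L+A)*r)
      - (1-a)*Real.exp ((L+B)*r) + 4*a*(1-a))
    (m' := fun r : ℝ => (1-4*a*(1-a))*(L*Real.exp (L*r)) - a*((L+A)*Real.exp ((L+A)*r))
      - (1-a)*((L+B)*Real.exp ((L+B)*r)))
    (m'' := fun r : ℝ => (1-4*a*(1-a))*(L*(L*Real.exp (L*r))) - a*((L+A)*((L+A)*Real.exp ((L+A)*r)))
      - (1-a)*((L+B)*((L+B)*Real.exp ((L+B)*r))))
    (by norm_num)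
    (fun t _ => ((((hd_exp_mul L t).const_mul (1-4*a*(1-a))).sub
        ((hd_exp_mul (L+A) t).const_mul a)).sub
        ((hd_exp_mul (L+B) t).const_mul (1-a))).add_const (4*a*(1-a)))
    (fun t _ => (((((hd_exp_mul L t).const_mul L).const_mul (1-4*a*(1-a))).sub
        (((hd_exp_mul (L+A) t).const_mul (L+A)).const_mul a)).sub
        (((hd_exp_mul (L+B) t).const_mul (L+B)).const_mul (1-a))))
    (by
      intro s _ t _ hst hpos
      have hE := Real.exp_pos (L*(t-s))
      have eq1 : Real.exp (L*s) * Real.exp (L*(t-s)) = Real.exp (L*t) := by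
        rw [← Real.exp_add]; congr 1; ring
      have le2 : Real.exp ((L+A)*t) ≤ Real.exp ((L+A)*s) * Real.exp (L*(t-s)) := by
        rw [← Real.exp_add]
        apply Real.exp_le_exp.mpr
        nlinarith
      have le3 : Real.exp ((L+B)*t) ≤ Real.exp ((L+B)*s) * Real.exp (L*(t-s)) := by
        rw [← Real.exp_add]
        apply Real.exp_le_exp.mpr
        nlinarith
      have f1 : a*(L+A)^2 * Real.exp ((L+A)*t) ≤ a*(L+A)^2 * (Real.exp ((L+A)*s) * Real.exp (L*(t-s))) :=
        mul_le_mul_of_nonneg_left le2 (by positivity)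
      have f2 : (1-a)*(L+B)^2 * Real.exp ((L+B)*t) ≤ (1-a)*(L+B)^2 * (Real.exp ((L+B)*s) * Real.exp (L*(t-s))) :=
        mul_le_mul_of_nonneg_left le3 (by positivity)
      have hmul := mul_pos hpos hE
      have expand : ((1-4*a*(1-a))*(L*(L*Real.exp (L*s))) - a*((L+A)*((L+A)*Real.exp ((L+A)*s)))
          - (1-a)*((L+B)*((L+B)*Real.exp ((L+B)*s)))) * Real.exp (L*(t-s))
          = (1-4*a*(1-a))*(L*L)*(Real.exp (L*s)*Real.exp (L*(t-s)))
            - a*(L+A)^2*(Real.exp ((L+A)*s)*Real.exp (L*(t-s)))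
            - (1-a)*(L+B)^2*(Real.exp ((L+B)*s)*Real.exp (L*(t-s))) := by ring
      rw [expand, eq1] at hmul
      linarith [hmul, f1, f2])
    (by simp only [mul_zero, Real.exp_zero, mul_one]; nlinarith [sq_nonneg (1-2*a)])
    (by
      simp only [mul_one]
      rw [Real.exp_add, Real.exp_add, hL, hA, hB, Real.exp_log two_pos, Real.exp_log ha,
        Real.exp_log hb]
      ring)
    (by
      simp only [mul_one]
      rw [Real.exp_add, Real.exp_add, hL, hA, hB, Real.exp_log two_pos, Real.exp_log ha,
        Real.exp_log hb]
      have hw := w_nonneg ha ha2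
      nlinarith [hw])
  have hMs := Mres (p-1) ⟨by linarith, by linarith⟩
  -- translate back
  have hE := Real.exp_pos (L*(p-1))
  have e1 : Real.exp (A*p) * Real.exp (L*(p-1)) = a * Real.exp ((L+A)*(p-1)) := by
    have : a * Real.exp ((L+A)*(p-1)) = Real.exp A * Real.exp ((L+A)*(p-1)) := by
      rw [hA, Real.exp_log ha]
    rw [this, ← Real.exp_add, ← Real.exp_add]
    congr 1; ring
  have e2 : Real.exp (B*p) * Real.exp (L*(p-1)) = (1-a) * Real.exp ((L+B)*(p-1)) := by
    have : (1-a) * Real.exp ((L+B)*(p-1)) = Real.exp B * Real.exp ((L+B)*(p-1)) := by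
      rw [hB, Real.exp_log hb]
    rw [this, ← Real.exp_add, ← Real.exp_add]
    congr 1; ring
  have e3 : Real.exp (L*(1-p)) * Real.exp (L*(p-1)) = 1 := by
    rw [← Real.exp_add, show L*(1-p) + L*(p-1) = 0 by ring, Real.exp_zero]
  have hX : 0 ≤ (1 - Real.exp (A*p) - Real.exp (B*p) - 4*a*(1-a)*(1 - Real.exp (L*(1-p)))) *
      Real.exp (L*(p-1)) := by
    have expand : (1 - Real.exp (A*p) - Real.exp (B*p) - 4*a*(1-a)*(1 - Real.exp (L*(1-p)))) *
        Real.exp (L*(p-1))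
        = (1-4*a*(1-a))*Real.exp (L*(p-1)) - (Real.exp (A*p) * Real.exp (L*(p-1)))
          - (Real.exp (B*p) * Real.exp (L*(p-1)))
          + 4*a*(1-a)*(Real.exp (L*(1-p)) * Real.exp (L*(p-1))) := by ring
    rw [expand, e1, e2, e3]
    linarith [hMs]
  by_contra hcon
  push_neg at hcon
  nlinarith [mul_pos (show (0:ℝ) < 4*a*(1-a)*(1 - Real.exp (L*(1-p)))
    - (1 - Real.exp (A*p) - Real.exp (B*p)) by linarith) hE, hX]

set_option maxHeartbeats 1000000 in
/-- Core strict inequality, exp form. -/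
private lemma core_ineq {a p q : ℝ} (ha : 0 < a) (ha2 : a < 1/2) (hp : 1 < p) (hp2 : p < 2)
    (hpq : p < q) (hq3 : q < 3) :
    (1 - Real.exp (Real.log a * q) - Real.exp (Real.log (1-a) * q)) *
      (1 - Real.exp (Real.log 2 * (1-p)))
      < (1 - Real.exp (Real.log 2 * (1-q))) *
      (1 - Real.exp (Real.log a * p) - Real.exp (Real.log (1-a) * p)) := by
  have hb : (0:ℝ) < 1 - a := by linarith
  set L := Real.log 2 with hL
  set A := Real.log a with hA
  set B := Real.log (1-a) with hB
  have hLpos : 0 < L := by rw [hL]; exact Real.log_pos (by norm_num)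
  have hAneg : A < 0 := Real.log_neg ha (by linarith)
  have hBneg : B < 0 := Real.log_neg hb (by linarith)
  have hALneg : A + L < 0 := by
    have : A + L = Real.log (2*a) := by rw [hA, hL, Real.log_mul (by norm_num) ha.ne']; ring
    rw [this]
    exact Real.log_neg (by linarith) (by linarith)
  have hBL : B + L ≠ 0 ∨ True := Or.inr trivial
  -- positivity of Pp, Pq, Fp
  have hPp : 0 < 1 - Real.exp (L*(1-p)) := by
    have : Real.exp (L*(1-p)) < 1 := by
      rw [Real.exp_lt_one_iff]; nlinarith
    linarith
  have hPq : 0 < 1 - Real.exp (L*(1-q)) := by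
    have : Real.exp (L*(1-q)) < 1 := by
      rw [Real.exp_lt_one_iff]; nlinarith
    linarith
  have hFp : 0 < 1 - Real.exp (A*p) - Real.exp (B*p) := by
    have h1 : Real.exp (A*p) < Real.exp (A*1) := by
      apply Real.exp_lt_exp.mpr; nlinarith
    have h2 : Real.exp (B*p) < Real.exp (B*1) := by
      apply Real.exp_lt_exp.mpr; nlinarith
    rw [mul_one, hA, Real.exp_log ha] at h1
    rw [mul_one, hB, Real.exp_log hb] at h2
    linarith
  set Pp := 1 - Real.exp (L*(1-p)) with hPpdef
  set Fp := 1 - Real.exp (A*p) - Real.exp (B*p) with hFpdef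
  set c := Fp / Pp with hc
  have hcPp : c * Pp = Fp := div_mul_cancel₀ _ hPp.ne'
  -- the functions
  set Φ : ℝ → ℝ := fun r => 1 - Real.exp (A*r) - Real.exp (B*r) - c*(1 - 2*Real.exp ((-L)*r))
    with hΦdef
  set Φ' : ℝ → ℝ := fun r => -(A*Real.exp (A*r)) - B*Real.exp (B*r) - 2*c*L*Real.exp ((-L)*r)
    with hΦ'def
  set G : ℝ → ℝ := fun r => -(A*Real.exp ((A+L)*r)) - B*Real.exp ((B+L)*r) - 2*c*L with hGdef
  set G' : ℝ → ℝ := fun r => -(A*((A+L)*Real.exp ((A+L)*r))) - B*((B+L)*Real.exp ((B+L)*r))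
    with hG'def
  set G'' : ℝ → ℝ := fun r => -(A*((A+L)*((A+L)*Real.exp ((A+L)*r))))
    - B*((B+L)*((B+L)*Real.exp ((B+L)*r))) with hG''def
  have hdΦ : ∀ t, HasDerivAt Φ (Φ' t) t := by
    intro t
    have h := (((hasDerivAt_const t (1:ℝ)).sub (hd_exp_mul A t)).sub (hd_exp_mul B t)).sub
      ((((hd_exp_mul (-L) t).const_mul 2).const_sub 1).const_mul c)
    refine h.congr_deriv ?_
    ring
  have hΦG : ∀ r, Φ' r = G r * Real.exp ((-L)*r) := by
    intro r
    have m1 : Real.exp ((A+L)*r) * Real.exp ((-L)*r) = Real.exp (A*r) := by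
      rw [← Real.exp_add]; congr 1; ring
    have m2 : Real.exp ((B+L)*r) * Real.exp ((-L)*r) = Real.exp (B*r) := by
      rw [← Real.exp_add]; congr 1; ring
    have expand : G r * Real.exp ((-L)*r)
        = -(A*(Real.exp ((A+L)*r) * Real.exp ((-L)*r)))
          - B*(Real.exp ((B+L)*r) * Real.exp ((-L)*r)) - 2*c*L*Real.exp ((-L)*r) := by
      rw [hGdef]; ring
    rw [expand, m1, m2, hΦ'def]
  have hdG : ∀ t, HasDerivAt G (G' t) t := by
    intro t
    have h := ((((hd_exp_mul (A+L) t).const_mul A).neg).sub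
      ((hd_exp_mul (B+L) t).const_mul B)).sub_const (2*c*L)
    refine h.congr_deriv ?_ <;> ring
  have hdG' : ∀ t, HasDerivAt G' (G'' t) t := by
    intro t
    have h := ((((hd_exp_mul (A+L) t).const_mul (A+L)).const_mul A).neg).sub
      (((hd_exp_mul (B+L) t).const_mul (B+L)).const_mul B)
    refine h.congr_deriv ?_ <;> ring
  have hG''pos : ∀ r, 0 < G'' r := by
    intro r
    have e1 := Real.exp_pos ((A+L)*r)
    have e2 := Real.exp_pos ((B+L)*r)
    have h1 : 0 < (A+L)^2 := by nlinarith
    have hB2 : 0 ≤ (B+L)^2 := sq_nonneg _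
    simp only [hG''def]
    have t1 : 0 < (-A) * ((A+L)^2 * Real.exp ((A+L)*r)) :=
      mul_pos (by linarith) (mul_pos h1 e1)
    have t2 : 0 ≤ (-B) * ((B+L)^2 * Real.exp ((B+L)*r)) :=
      mul_nonneg (by linarith) (mul_nonneg hB2 e2.le)
    nlinarith [t1, t2]
  have hGmono : ∀ u v : ℝ, u < v → G' u < G' v := by
    intro u v huv
    obtain ⟨ξ, _, hξ⟩ := slope_mvt huv (fun t _ => hdG' t)
    have h2 : 0 < (G' v - G' u)/(v-u) := by rw [← hξ]; exact hG''pos ξ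
    rcases div_pos_iff.mp h2 with ⟨h3, _⟩ | ⟨_, h4⟩
    · linarith
    · linarith
  -- values of Φ
  have hΦ1 : Φ 1 = 0 := by
    simp only [hΦdef, mul_one]
    rw [Real.exp_neg, hL, hA, hB, Real.exp_log two_pos, Real.exp_log ha, Real.exp_log hb]
    norm_num
  have hPprw : (1:ℝ) - 2*Real.exp ((-L)*p) = Pp := by
    rw [hPpdef, show L*(1-p) = L + (-L)*p by ring, Real.exp_add, hL, Real.exp_log two_pos]
  have hΦp : Φ p = 0 := by
    simp only [hΦdef]
    rw [hPprw, ← hFpdef, hc, div_mul_cancel₀ _ hPp.ne']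
    ring
  have hΦ3 : Φ 3 ≤ 0 := by
    have hkey := key_ineq ha ha2.le hp hp2
    rw [← hA, ← hB, ← hL] at hkey
    have hc4 : 4*a*(1-a) ≤ c := by
      rw [hc, le_div_iff₀ hPp]
      exact hkey
    have e3a : Real.exp (A*3) = a*(a*a) := by
      rw [show A*3 = A+(A+A) by ring, Real.exp_add, Real.exp_add, hA, Real.exp_log ha]
    have e3b : Real.exp (B*3) = (1-a)*((1-a)*(1-a)) := by
      rw [show B*3 = B+(B+B) by ring, Real.exp_add, Real.exp_add, hB, Real.exp_log hb]
    have e3L : Real.exp ((-L)*3) = 2⁻¹*(2⁻¹*2⁻¹) := by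
      rw [show (-L)*3 = -L+(-L+ -L) by ring, Real.exp_add, Real.exp_add, Real.exp_neg, hL,
        Real.exp_log two_pos]
    simp only [hΦdef]
    rw [e3a, e3b, e3L]
    nlinarith [hc4]
  clear_value L A B Pp Fp c Φ Φ' G G' G''
  -- Φ q < 0
  have hΦq : Φ q < 0 := by
    by_contra hcon
    push_neg at hcon
    obtain ⟨c₀, hc₀, hc₀'⟩ := slope_mvt hp (fun t _ => hdΦ t)
    rw [hΦ1, hΦp] at hc₀'
    have hΦc₀ : Φ' c₀ = 0 := by rw [hc₀']; simp
    have hGc₀ : G c₀ = 0 := by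
      have := hΦG c₀
      rw [hΦc₀] at this
      rcases mul_eq_zero.mp this.symm with h | h
      · exact h
      · exact absurd h (Real.exp_pos _).ne'
    obtain ⟨m, hm, hm'⟩ := slope_mvt hpq (fun t _ => hdΦ t)
    rw [hΦp] at hm'
    have hΦm : 0 ≤ Φ' m := by rw [hm']; apply div_nonneg <;> linarith
    have hGm : 0 ≤ G m := by
      by_contra hneg
      push_neg at hneg
      have h2 := mul_neg_of_neg_of_pos hneg (Real.exp_pos ((-L)*m))
      rw [← hΦG m] at h2
      linarith
    obtain ⟨d, hd, hd'⟩ := slope_mvt hq3 (fun t _ => hdΦ t)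
    have hΦd : Φ' d ≤ 0 := by
      rw [hd']
      apply div_nonpos_of_nonpos_of_nonneg <;> linarith
    have hGd : G d ≤ 0 := by
      by_contra hneg
      push_neg at hneg
      have h2 := mul_pos hneg (Real.exp_pos ((-L)*d))
      rw [← hΦG d] at h2
      linarith
    exact three_point hdG hGmono (lt_trans hc₀.2 hm.1) (lt_trans hm.2 hd.1) hGc₀ hGm hGd
  -- unfold
  have hPqrw : (1:ℝ) - 2*Real.exp ((-L)*q) = 1 - Real.exp (L*(1-q)) := by
    rw [show L*(1-q) = L + (-L)*q by ring, Real.exp_add, hL, Real.exp_log two_pos]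
  simp only [hΦdef] at hΦq
  rw [hPqrw] at hΦq
  -- hΦq : 1 - exp(A q) - exp(B q) - c * (1 - exp (L(1-q))) < 0
  have step : (1 - Real.exp (A*q) - Real.exp (B*q)) * Pp < (1 - Real.exp (L*(1-q))) * Fp := by
    have h1 : (1 - Real.exp (A*q) - Real.exp (B*q)) < c * (1 - Real.exp (L*(1-q))) := by
      linarith
    calc (1 - Real.exp (A*q) - Real.exp (B*q)) * Pp
        < (c * (1 - Real.exp (L*(1-q)))) * Pp := by
          exact mul_lt_mul_of_pos_right h1 hPp
      _ = (1 - Real.exp (L*(1-q))) * (c * Pp) := by ring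
      _ = (1 - Real.exp (L*(1-q))) * Fp := by rw [hcPp]
  exact step

private lemma core_rpow {x p q : ℝ} (hx : 0 < x) (hx2 : x < 1/2) (hp : 1 < p) (hp2 : p < 2)
    (hpq : p < q) (hq3 : q < 3) :
    (1 - x^q - (1-x)^q) * (1 - (2:ℝ)^(1-p)) < (1 - (2:ℝ)^(1-q)) * (1 - x^p - (1-x)^p) := by
  have hb : (0:ℝ) < 1 - x := by linarith
  rw [Real.rpow_def_of_pos hx, Real.rpow_def_of_pos hx, Real.rpow_def_of_pos hb,
    Real.rpow_def_of_pos hb, Real.rpow_def_of_pos two_pos, Real.rpow_def_of_pos two_pos]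
  exact core_ineq hx hx2 hp hp2 hpq hq3

private lemma sum_lt_one {x r : ℝ} (hx : 0 < x) (hx2 : x ≤ 1/2) (hr : 1 < r) :
    x^r + (1-x)^r < 1 := by
  have h1 : x^r < x^(1:ℝ) := Real.rpow_lt_rpow_of_exponent_gt hx (by linarith) hr
  have h2 : (1-x)^r < (1-x)^(1:ℝ) :=
    Real.rpow_lt_rpow_of_exponent_gt (by linarith) (by linarith) hr
  rw [Real.rpow_one] at h1 h2
  linarith

private lemma half_sum (r : ℝ) : ((1:ℝ)/2)^r + ((1:ℝ)/2)^r = (2:ℝ)^(1-r) := by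
  have h1 : ((1:ℝ)/2)^r = (2:ℝ)^(-r) := by
    rw [show ((1:ℝ)/2) = 2⁻¹ by norm_num, Real.inv_rpow (by norm_num),
      ← Real.rpow_neg (by norm_num)]
  rw [h1, show (1:ℝ)-r = 1 + -r by ring, Real.rpow_add two_pos, Real.rpow_one]
  ring

private lemma sum_gt {x r : ℝ} (hx : 0 ≤ x) (hx2 : x < 1/2) (hr : 1 < r) :
    (2:ℝ)^(1-r) < x^r + (1-x)^r := by
  have hconv := strictConvexOn_rpow hr
  have hne : x ≠ 1 - x := by intro h; linarith [h]
  have h := hconv.2 (show x ∈ Ici (0:ℝ) from hx) (show 1-x ∈ Ici (0:ℝ) by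
    simp only [mem_Ici]; linarith) hne one_half_pos one_half_pos (by norm_num)
  simp only [smul_eq_mul] at h
  rw [show (1:ℝ)/2 * x + 1/2 * (1-x) = 1/2 by ring] at h
  have hh := half_sum r
  linarith

/-- Case `s < 2` of Lemma: with `1 < p < 2`, `1 < q < 3`, `p < q` and `λ ≥ 0`,
the minimum of `f_λ(x) = x^q + (1-x)^q - λ(x^p + (1-x)^p)` on `[0,1/2]` is attained
only at `x = 0` when `λ > λ_c` and only at `x = 1/2` when `λ < λ_c`, where
`λ_c = (1 - 2^(1-q))/(1 - 2^(1-p))`. -/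
theorem min_f_sharp_transition
    (p q lam : ℝ) (hp : 1 < p) (hp2 : p < 2) (hq1 : 1 < q) (hq3 : q < 3)
    (hpq : p < q) (hlam : 0 ≤ lam)
    (f : ℝ → ℝ)
    (hf : ∀ x, f x = x ^ q + (1 - x) ^ q - lam * (x ^ p + (1 - x) ^ p))
    (lamc : ℝ) (hlamc : lamc = (1 - 2 ^ (1 - q)) / (1 - 2 ^ (1 - p))) :
    (lamc < lam → ∀ x ∈ Icc (0 : ℝ) (1/2), x ≠ 0 → f 0 < f x) ∧
    (lam < lamc → ∀ x ∈ Icc (0 : ℝ) (1/2), x ≠ 1/2 → f (1/2) < f x) := by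
  have hPp : (0:ℝ) < 1 - (2:ℝ)^(1-p) := by
    have := Real.rpow_lt_one_of_one_lt_of_neg (show (1:ℝ)<2 by norm_num)
      (show 1-p<0 by linarith)
    linarith
  have hPq : (0:ℝ) < 1 - (2:ℝ)^(1-q) := by
    have := Real.rpow_lt_one_of_one_lt_of_neg (show (1:ℝ)<2 by norm_num)
      (show 1-q<0 by linarith)
    linarith
  have hf0 : f 0 = 1 - lam := by
    have e0q : (0:ℝ)^q = 0 := Real.zero_rpow (by linarith)
    have e0p : (0:ℝ)^p = 0 := Real.zero_rpow (by linarith)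
    rw [hf]
    norm_num [e0q, e0p, Real.one_rpow]
  have hfhalf : f (1/2) = (2:ℝ)^(1-q) - lam * (2:ℝ)^(1-p) := by
    rw [hf, show (1:ℝ) - 1/2 = 1/2 by norm_num, half_sum q, half_sum p]
  constructor
  · intro hlt x hxmem hxne
    have hx0 : 0 < x := lt_of_le_of_ne hxmem.1 (Ne.symm hxne)
    have hx2 : x ≤ 1/2 := hxmem.2
    rcases eq_or_lt_of_le hx2 with heq | hlt2
    · rw [heq, hfhalf, hf0]
      have h2 : (1 - (2:ℝ)^(1-q))/(1 - (2:ℝ)^(1-p)) < lam := hlamc ▸ hlt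
      have h3 := (div_lt_iff₀ hPp).mp h2
      linarith
    · have hcore := core_rpow hx0 hlt2 hp hp2 hpq hq3
      have hS1p : x^p + (1-x)^p < 1 := sum_lt_one hx0 hx2 hp
      have hH : 0 < 1 - (x^p + (1-x)^p) := by linarith
      have h2 : 1 - (x^q+(1-x)^q) < lamc * (1 - (x^p+(1-x)^p)) := by
        rw [hlamc, div_mul_eq_mul_div, lt_div_iff₀ hPp]
        nlinarith [hcore]
      have h3 : lamc * (1 - (x^p+(1-x)^p)) ≤ lam * (1 - (x^p+(1-x)^p)) :=
        mul_le_mul_of_nonneg_right hlt.le hH.le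
      rw [hf0, hf x]
      linarith
  · intro hlt x hxmem hxne
    have hx2 : x < 1/2 := lt_of_le_of_ne hxmem.2 hxne
    have hx0 : (0:ℝ) ≤ x := hxmem.1
    have hS2p : (2:ℝ)^(1-p) < x^p + (1-x)^p := sum_gt hx0 hx2 hp
    rcases eq_or_lt_of_le hx0 with heq | hx0'
    · rw [← heq, hfhalf, hf0]
      have h2 : lam < (1 - (2:ℝ)^(1-q))/(1 - (2:ℝ)^(1-p)) := hlamc ▸ hlt
      have h3 := (lt_div_iff₀ hPp).mp h2
      linarith
    · have hcore := core_rpow hx0' hx2 hp hp2 hpq hq3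
      have hH : 0 < (x^p+(1-x)^p) - (2:ℝ)^(1-p) := by linarith
      have h2 : lamc * ((x^p+(1-x)^p) - (2:ℝ)^(1-p)) ≤ (x^q+(1-x)^q) - (2:ℝ)^(1-q) := by
        rw [hlamc, div_mul_eq_mul_div, div_le_iff₀ hPp]
        nlinarith [hcore]
      have h3 : lam * ((x^p+(1-x)^p) - (2:ℝ)^(1-p)) < lamc * ((x^p+(1-x)^p) - (2:ℝ)^(1-p)) :=
        mul_lt_mul_of_pos_right hlt hH
      rw [hfhalf, hf x]
      linarith
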